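/- arXiv:2008.00301 — 7 statements merged into one kernel-verified Lean document; each statement's English description precedes it below -/
import Mathlib

section
/- Let X ⊆ ℝⁿ and x̂ ∈ ℝⁿ. If x̂ lies in the topological interior of the convex hull of X, then the inverse-feasible region is trivial: C(x̂, X) = {0}. -/
/-- The inverse-feasible region `C(x̂, S)`: the set of cost vectors `c` for which `x̂`
minimizes `⟪c, ·⟫` over `S`. -/
def invFeas {n : ℕ} (xh : EuclideanSpace ℝ (Fin n)) (S : Set (EuclideanSpace ℝ (Fin n))) :
    Set (EuclideanSpace ℝ (Fin n)) :=
  {c | ∀ x ∈ S, (inner ℝ c xh : ℝ) ≤ inner ℝ c x}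

/-- If `x̂` lies in the interior of the convex hull of `X`, the inverse-feasible
region is trivial. -/
theorem invFeas_eq_zero_of_mem_interior {n : ℕ} (X : Set (EuclideanSpace ℝ (Fin n)))
    (xh : EuclideanSpace ℝ (Fin n)) (h : xh ∈ interior (convexHull ℝ X)) :
    invFeas xh X = {0} := by
  ext c
  simp only [Set.mem_singleton_iff, invFeas, Set.mem_setOf_eq]
  constructor
  · intro hc
    -- the inequality extends to the convex hull
    have hlin : IsLinearMap ℝ (fun x : EuclideanSpace ℝ (Fin n) => (inner ℝ c x : ℝ)) :=
      ⟨fun x y => inner_add_right c x y, fun r x => real_inner_smul_right c x r⟩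
    have hhull : ∀ x ∈ convexHull ℝ X, (inner ℝ c xh : ℝ) ≤ inner ℝ c x := by
      intro x hx
      exact convexHull_min hc (convex_halfSpace_ge hlin _) hx
    by_contra hne
    obtain ⟨ε, hε, hball⟩ := Metric.isOpen_iff.mp isOpen_interior xh h
    have hcn : (0:ℝ) < ‖c‖ := norm_pos_iff.mpr hne
    set t : ℝ := ε / (2 * ‖c‖) with ht
    have htpos : 0 < t := by positivity
    have hmem : xh - t • c ∈ convexHull ℝ X := by
      apply interior_subset
      apply hball
      simp only [Metric.mem_ball, dist_eq_norm]
      have : xh - t • c - xh = -(t • c) := by abel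
      rw [this, norm_neg, norm_smul, Real.norm_of_nonneg htpos.le, ht]
      have : ε / (2 * ‖c‖) * ‖c‖ = ε / 2 := by field_simp
      rw [this]; linarith
    have := hhull _ hmem
    rw [inner_sub_right, real_inner_smul_right, real_inner_self_eq_norm_sq] at this
    have hpos : 0 < t * ‖c‖ ^ 2 := by positivity
    linarith
  · rintro rfl
    intro x hx
    simp
end

section
/- (Theorem 1, precise form.) Let x̂ ∈ ℝⁿ and let X, G ⊆ ℝⁿ. Then G is a generator set for X, i.e., C(x̂, G) = C(x̂, X), if and only if the topological closures of the pointed conic hulls of the translated sets coincide: closure (cone({x − x̂ : x ∈ G})) = closure (cone({x − x̂ : x ∈ X})). -/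
/-- The pointed conic hull of `S`: all finite nonnegative linear combinations of
elements of `S`, i.e. the `ℝ≥0`-submodule spanned by `S`. -/
def cone {n : ℕ} (S : Set (EuclideanSpace ℝ (Fin n))) : Set (EuclideanSpace ℝ (Fin n)) :=
  (Submodule.span {c : ℝ // 0 ≤ c} S : Submodule {c : ℝ // 0 ≤ c} (EuclideanSpace ℝ (Fin n)))

section Aux

variable {n : ℕ}

open scoped RealInnerProductSpace

local notation "H" => EuclideanSpace ℝ (Fin n)

/-- `invFeas` is the inner dual cone of the translated set. -/
lemma invFeas_eq_dual (xh : H) (S : Set H) :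
    invFeas xh S = (ProperCone.innerDual ((fun x => x - xh) '' S) : Set H) := by
  ext c
  simp only [invFeas, Set.mem_setOf_eq, SetLike.mem_coe, ProperCone.mem_innerDual]
  constructor
  · rintro h y ⟨x, hx, rfl⟩
    have h1 := h x hx
    have e1 : (inner ℝ x c : ℝ) = inner ℝ c x := real_inner_comm c x
    have e2 : (inner ℝ xh c : ℝ) = inner ℝ c xh := real_inner_comm c xh
    show (0:ℝ) ≤ inner ℝ (x - xh) c
    rw [inner_sub_left]
    linarith
  · intro h x hx
    have h1 := h (x := x - xh) ⟨x, hx, rfl⟩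
    rw [inner_sub_left] at h1
    have e1 : (inner ℝ x c : ℝ) = inner ℝ c x := real_inner_comm c x
    have e2 : (inner ℝ xh c : ℝ) = inner ℝ c xh := real_inner_comm c xh
    linarith

/-- The dual cone of a set equals the dual cone of the closure of its conic hull. -/
lemma dual_closure_cone (T : Set H) :
    ProperCone.innerDual (closure (cone T)) = ProperCone.innerDual T := by
  apply le_antisymm
  · exact ProperCone.innerDual_le_innerDual fun x hx =>
      subset_closure (Submodule.subset_span hx)
  · intro c hc
    rw [ProperCone.mem_innerDual] at hc ⊢
    intro x hx
    have hcont : IsClosed {y : H | 0 ≤ ⟪y, c⟫} :=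
      isClosed_le continuous_const (Continuous.inner continuous_id continuous_const)
    have hsub : cone T ⊆ {y : H | 0 ≤ ⟪y, c⟫} := by
      intro y hy
      simp only [cone, SetLike.mem_coe] at hy
      induction hy using Submodule.span_induction with
      | mem z hz => exact hc (x := z) hz
      | zero =>
          show (0:ℝ) ≤ ⟪(0:H), c⟫
          simp
      | add a b _ _ ha hb =>
          show (0:ℝ) ≤ ⟪a + b, c⟫
          rw [inner_add_left]
          exact add_nonneg ha hb
      | smul r a _ ha =>
          have hra : (r • a : H) = (r.1 : ℝ) • a := rfl
          show (0:ℝ) ≤ ⟪r • a, c⟫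
          rw [hra, real_inner_smul_left]
          exact mul_nonneg r.2 ha
    exact (hcont.closure_subset_iff.mpr hsub) hx

lemma closure_cone_eq_convexCone_closure (T : Set H) :
    closure (cone T) =
      (((Submodule.span {c : ℝ // 0 ≤ c} T : PointedCone ℝ H) :
          ConvexCone ℝ H).closure : Set H) := rfl

end Aux

/-- Theorem 1, precise form: `G` is a generator set for `X` iff the closures of
the pointed conic hulls of the translated sets coincide. -/
theorem generatorSet_iff_closure_cone_eq {n : ℕ} (xh : EuclideanSpace ℝ (Fin n))
    (X G : Set (EuclideanSpace ℝ (Fin n))) :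
    invFeas xh G = invFeas xh X ↔
      closure (cone ((fun x => x - xh) '' G)) = closure (cone ((fun x => x - xh) '' X)) := by
  set TG := (fun x => x - xh) '' G
  set TX := (fun x => x - xh) '' X
  constructor
  · intro h
    have hdual : ProperCone.innerDual TG = ProperCone.innerDual TX := by
      rw [invFeas_eq_dual, invFeas_eq_dual] at h
      exact SetLike.coe_injective h
    -- bipolar
    have key : ∀ T : Set (EuclideanSpace ℝ (Fin n)),
        (ProperCone.innerDual (ProperCone.innerDual T : Set (EuclideanSpace ℝ (Fin n))) :
          Set (EuclideanSpace ℝ (Fin n))) = closure (cone T) := by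
      intro T
      set K : ProperCone ℝ (EuclideanSpace ℝ (Fin n)) :=
        (Submodule.span {c : ℝ // 0 ≤ c} T : PointedCone ℝ _).closure with hK
      have hset : closure (cone T) = (K : Set (EuclideanSpace ℝ (Fin n))) := rfl
      have := ProperCone.innerDual_innerDual K
      have hdc : ProperCone.innerDual (K : Set (EuclideanSpace ℝ (Fin n))) =
          ProperCone.innerDual T := by
        rw [← hset]; exact dual_closure_cone T
      rw [← hdc, this, hset]
    rw [← key, ← key, hdual]
  · intro h
    rw [invFeas_eq_dual, invFeas_eq_dual, ← dual_closure_cone TG, ← dual_closure_cone TX, h]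
end

section
/- (Theorem 1, finite case.) Let x̂ ∈ ℝⁿ and let X, G ⊆ ℝⁿ be finite sets. Then C(x̂, G) = C(x̂, X) if and only if the pointed conic hulls of the translated sets coincide exactly: cone({x − x̂ : x ∈ G}) = cone({x − x̂ : x ∈ X}). -/
open Finset

variable {n : ℕ}

local notation "E" n => EuclideanSpace ℝ (Fin n)

/-- membership in a finitely generated cone via nonnegative coefficients. -/
lemma mem_cone_finset {s : Finset (EuclideanSpace ℝ (Fin n))} {x : EuclideanSpace ℝ (Fin n)} :
    x ∈ Submodule.span {c : ℝ // 0 ≤ c} (s : Set (EuclideanSpace ℝ (Fin n))) ↔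
      ∃ f : EuclideanSpace ℝ (Fin n) → ℝ, (∀ e ∈ s, 0 ≤ f e) ∧ ∑ e ∈ s, f e • e = x := by
  constructor
  · intro hx
    obtain ⟨f, -, hf⟩ := Submodule.mem_span_finset.1 hx
    exact ⟨fun e => (f e : ℝ), fun e _ => (f e).2, by simpa using hf⟩
  · rintro ⟨f, hf, rfl⟩
    refine Submodule.sum_mem _ fun e he => ?_
    have : f e • e = (⟨f e, hf e he⟩ : {c : ℝ // 0 ≤ c}) • e := rfl
    rw [this]
    exact Submodule.smul_mem _ _ (Submodule.subset_span he)


/-- Linear independence of the elements of a finset. -/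
def LIF {n : ℕ} (t : Finset (EuclideanSpace ℝ (Fin n))) : Prop :=
  LinearIndependent ℝ (fun y : (↑t : Set (EuclideanSpace ℝ (Fin n))) => (y : EuclideanSpace ℝ (Fin n)))

/-- Conic Carathéodory: every element of a finitely generated cone lies in the cone of a
linearly independent subset of the generators. -/
lemma cone_caratheodory {n : ℕ} :
    ∀ (k : ℕ) (s : Finset (EuclideanSpace ℝ (Fin n))), s.card ≤ k →
      ∀ x ∈ Submodule.span {c : ℝ // 0 ≤ c} (s : Set (EuclideanSpace ℝ (Fin n))),
        ∃ t : Finset (EuclideanSpace ℝ (Fin n)), t ⊆ s ∧ LIF t ∧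
          x ∈ Submodule.span {c : ℝ // 0 ≤ c} (t : Set (EuclideanSpace ℝ (Fin n))) := by
  classical
  intro k
  induction k with
  | zero =>
    intro s hs x hx
    rw [Nat.le_zero, Finset.card_eq_zero] at hs
    subst hs
    refine ⟨∅, subset_rfl, ?_, hx⟩
    unfold LIF
    haveI : IsEmpty (↑((∅ : Finset (EuclideanSpace ℝ (Fin n))) : Set (EuclideanSpace ℝ (Fin n)))) :=
      Set.isEmpty_coe_sort.mpr (by simp)
    exact linearIndependent_empty_type
  | succ k ih =>
    intro s hs x hx
    by_cases hLI : LIF s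
    · exact ⟨s, subset_rfl, hLI, hx⟩
    -- a nontrivial linear relation on `s`
    obtain ⟨g, hgsum, i, hgi⟩ := Fintype.not_linearIndependent_iff.1 hLI
    -- turn it into a function on the whole space
    set G0 : EuclideanSpace ℝ (Fin n) → ℝ :=
      fun e => if h : e ∈ s then g ⟨e, h⟩ else 0 with hG0
    have hG0sum : ∑ e ∈ s, G0 e • e = 0 := by
      rw [← Finset.sum_coe_sort s (fun e => G0 e • e)]
      rw [← hgsum]
      refine Finset.sum_congr rfl fun j _ => ?_
      simp [hG0, j.2]
    have hG0ne : G0 (i : EuclideanSpace ℝ (Fin n)) ≠ 0 := by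
      have hi' : (i : EuclideanSpace ℝ (Fin n)) ∈ s := i.2
      simpa [hG0, hi'] using hgi
    -- main step, assuming the relation has a positive coefficient
    have key : ∀ Gf : EuclideanSpace ℝ (Fin n) → ℝ, (∑ e ∈ s, Gf e • e = 0) →
        (∃ e ∈ s, 0 < Gf e) →
        ∃ t : Finset (EuclideanSpace ℝ (Fin n)), t ⊆ s ∧ LIF t ∧
          x ∈ Submodule.span {c : ℝ // 0 ≤ c} (t : Set (EuclideanSpace ℝ (Fin n))) := by
      rintro Gf hGsum ⟨e₀, he₀s, he₀pos⟩
      obtain ⟨f, hf, hfx⟩ := mem_cone_finset.1 hx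
      set P : Finset (EuclideanSpace ℝ (Fin n)) := s.filter (fun e => 0 < Gf e) with hP
      have hPne : P.Nonempty := ⟨e₀, Finset.mem_filter.2 ⟨he₀s, he₀pos⟩⟩
      obtain ⟨i₀, hi₀P, hi₀min⟩ := P.exists_min_image (fun e => f e / Gf e) hPne
      have hi₀s : i₀ ∈ s := (Finset.mem_filter.1 hi₀P).1
      have hGi₀ : 0 < Gf i₀ := (Finset.mem_filter.1 hi₀P).2
      set τ : ℝ := f i₀ / Gf i₀ with hτ
      have hτ0 : 0 ≤ τ := div_nonneg (hf _ hi₀s) hGi₀.le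
      set f' : EuclideanSpace ℝ (Fin n) → ℝ := fun e => f e - τ * Gf e with hf'
      have hf'nonneg : ∀ e ∈ s, 0 ≤ f' e := by
        intro e he
        by_cases hpos : 0 < Gf e
        · have h1 : τ ≤ f e / Gf e := hi₀min e (Finset.mem_filter.2 ⟨he, hpos⟩)
          have h2 := (le_div_iff₀ hpos).1 h1
          simp only [hf']; linarith
        · push_neg at hpos
          have h1 : τ * Gf e ≤ 0 := mul_nonpos_of_nonneg_of_nonpos hτ0 hpos
          have h2 := hf e he
          simp only [hf']; linarith
      have hf'i₀ : f' i₀ = 0 := by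
        simp only [hf', hτ]
        field_simp
        ring
      have hf'sum : ∑ e ∈ s, f' e • e = x := by
        have h1 : ∑ e ∈ s, (τ * Gf e) • e = τ • ∑ e ∈ s, Gf e • e := by
          rw [Finset.smul_sum]
          exact Finset.sum_congr rfl fun e _ => by rw [mul_smul]
        simp only [hf', sub_smul, Finset.sum_sub_distrib]
        rw [hfx, h1, hGsum, smul_zero, sub_zero]
      -- drop `i₀`
      have hx' : x ∈ Submodule.span {c : ℝ // 0 ≤ c}
          ((s.erase i₀ : Finset (EuclideanSpace ℝ (Fin n))) : Set (EuclideanSpace ℝ (Fin n))) := by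
        refine mem_cone_finset.2 ⟨f', fun e he => hf'nonneg e (Finset.mem_of_mem_erase he), ?_⟩
        rw [← hf'sum, ← Finset.add_sum_erase s _ hi₀s, hf'i₀, zero_smul, zero_add]
      have hcard : (s.erase i₀).card ≤ k := by
        have := Finset.card_erase_of_mem hi₀s
        have := Finset.card_pos.2 ⟨i₀, hi₀s⟩
        omega
      obtain ⟨t, hts, htLI, hxt⟩ := ih (s.erase i₀) hcard x hx'
      exact ⟨t, hts.trans (Finset.erase_subset _ _), htLI, hxt⟩
    rcases lt_or_gt_of_ne hG0ne with hneg | hpos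
    · refine key (fun e => -G0 e) ?_ ⟨i, i.2, by simpa using hneg⟩
      simp only [neg_smul]
      rw [Finset.sum_neg_distrib, hG0sum, neg_zero]
    · exact key G0 hG0sum ⟨i, i.2, hpos⟩

/-- The cone over a linearly independent finite set is closed. -/
lemma isClosed_cone_of_LIF {n : ℕ} (t : Finset (EuclideanSpace ℝ (Fin n))) (ht : LIF t) :
    IsClosed ((Submodule.span {c : ℝ // 0 ≤ c}
      (t : Set (EuclideanSpace ℝ (Fin n))) : Submodule {c : ℝ // 0 ≤ c} (EuclideanSpace ℝ (Fin n)))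
        : Set (EuclideanSpace ℝ (Fin n))) := by
  classical
  set ι := (↑t : Set (EuclideanSpace ℝ (Fin n)))
  -- the linear map sending coefficients to the combination
  set L : (ι → ℝ) →ₗ[ℝ] EuclideanSpace ℝ (Fin n) :=
    { toFun := fun f => ∑ i : ι, f i • (i : EuclideanSpace ℝ (Fin n))
      map_add' := by
        intro f g
        simp [add_smul, Finset.sum_add_distrib]
      map_smul' := by
        intro c f
        simp [Finset.smul_sum, smul_smul] } with hL
  have hinj : Function.Injective L := by
    rw [← LinearMap.ker_eq_bot]
    rw [LinearMap.ker_eq_bot']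
    intro f hf
    have := Fintype.linearIndependent_iff.1 ht f (by simp only [hL, LinearMap.coe_mk, AddHom.coe_mk] at hf; convert hf)
    funext i
    exact this i
  have hemb := LinearMap.isClosedEmbedding_of_injective
    (LinearMap.ker_eq_bot.2 hinj)
  have horth : IsClosed {f : ι → ℝ | ∀ i, 0 ≤ f i} := by
    have : {f : ι → ℝ | ∀ i, 0 ≤ f i} = ⋂ i : ι, {f : ι → ℝ | 0 ≤ f i} := by
      ext f; simp
    rw [this]
    exact isClosed_iInter fun i =>
      IsClosed.preimage (continuous_apply i) isClosed_Ici
  have himg : ((Submodule.span {c : ℝ // 0 ≤ c} (t : Set (EuclideanSpace ℝ (Fin n)))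
        : Submodule {c : ℝ // 0 ≤ c} (EuclideanSpace ℝ (Fin n))) : Set (EuclideanSpace ℝ (Fin n)))
      = L '' {f : ι → ℝ | ∀ i, 0 ≤ f i} := by
    ext x
    constructor
    · intro hx
      obtain ⟨f, hf, hfx⟩ := mem_cone_finset.1 hx
      refine ⟨fun i => f i, fun i => hf i i.2, ?_⟩
      simp only [hL, LinearMap.coe_mk, AddHom.coe_mk]
      rw [Finset.sum_finset_coe (s := t) (f := fun e => f e • e)]
      exact hfx
    · rintro ⟨f, hf, rfl⟩
      refine mem_cone_finset.2
        ⟨fun e => if h : e ∈ t then f ⟨e, h⟩ else 0, fun e he => by simp [he, hf ⟨e, he⟩], ?_⟩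
      simp only [hL, LinearMap.coe_mk, AddHom.coe_mk]
      rw [← Finset.sum_finset_coe (s := t) (f := fun e => (if h : e ∈ t then f ⟨e, h⟩ else 0) • e)]
      exact Finset.sum_congr rfl fun j _ => by simp [j.2]
  rw [himg]
  exact hemb.isClosedMap _ horth

/-- The cone over any finite set is closed. -/
lemma isClosed_cone_finset {n : ℕ} (s : Finset (EuclideanSpace ℝ (Fin n))) :
    IsClosed ((Submodule.span {c : ℝ // 0 ≤ c}
      (s : Set (EuclideanSpace ℝ (Fin n))) : Submodule {c : ℝ // 0 ≤ c} (EuclideanSpace ℝ (Fin n)))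
        : Set (EuclideanSpace ℝ (Fin n))) := by
  classical
  have hunion : ((Submodule.span {c : ℝ // 0 ≤ c} (s : Set (EuclideanSpace ℝ (Fin n)))
        : Submodule {c : ℝ // 0 ≤ c} (EuclideanSpace ℝ (Fin n))) : Set (EuclideanSpace ℝ (Fin n)))
      = ⋃ t ∈ (s.powerset.filter fun t => LIF t), ((Submodule.span {c : ℝ // 0 ≤ c}
          (t : Set (EuclideanSpace ℝ (Fin n)))
          : Submodule {c : ℝ // 0 ≤ c} (EuclideanSpace ℝ (Fin n)))
          : Set (EuclideanSpace ℝ (Fin n))) := by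
    ext x
    simp only [Set.mem_iUnion, SetLike.mem_coe, Finset.mem_filter, Finset.mem_powerset]
    constructor
    · intro hx
      obtain ⟨t, hts, htLI, hxt⟩ := cone_caratheodory s.card s le_rfl x hx
      exact ⟨t, ⟨hts, htLI⟩, hxt⟩
    · rintro ⟨t, ⟨hts, -⟩, hxt⟩
      exact Submodule.span_mono (Finset.coe_subset.2 hts) hxt
  rw [hunion]
  exact (Set.Finite.isClosed_biUnion (Finset.finite_toSet _)
    fun t ht => isClosed_cone_of_LIF t (Finset.mem_filter.1 ht).2)

open scoped RealInnerProductSpace in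
/-- The inner dual cone of a set equals that of its conic hull. -/
lemma innerDualCone_cone {n : ℕ} (S : Set (EuclideanSpace ℝ (Fin n))) :
    ProperCone.innerDual (cone S) = ProperCone.innerDual S := by
  apply le_antisymm
  · exact ProperCone.innerDual_le_innerDual Submodule.subset_span
  · intro c hc
    rw [ProperCone.mem_innerDual] at hc ⊢
    intro x hx
    induction hx using Submodule.span_induction with
    | mem x h => exact hc h
    | zero => simp
    | add x y hx hy hcx hcy => rw [inner_add_left]; positivity
    | smul a x hx hcx =>
      have : ⟪a • x, c⟫ = (a : ℝ) * ⟪x, c⟫ := by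
        rw [← Nonneg.coe_smul, real_inner_smul_left]
      rw [this]
      exact mul_nonneg a.2 hcx

open scoped RealInnerProductSpace in
/-- `invFeas` is the inner dual cone of the translated set. -/
lemma invFeas_eq_innerDualCone {n : ℕ} (xh : EuclideanSpace ℝ (Fin n))
    (S : Set (EuclideanSpace ℝ (Fin n))) :
    invFeas xh S = ((ProperCone.innerDual ((fun x => x - xh) '' S)) : Set (EuclideanSpace ℝ (Fin n))) := by
  ext c
  simp only [invFeas, Set.mem_setOf_eq, SetLike.mem_coe, ProperCone.mem_innerDual,
    Set.forall_mem_image]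
  refine forall₂_congr fun x hx => ?_
  rw [inner_sub_left, sub_nonneg, real_inner_comm x c, real_inner_comm xh c]

/-- Double dual of a finitely generated cone. -/
lemma cone_double_dual {n : ℕ} (S : Set (EuclideanSpace ℝ (Fin n))) (hS : S.Finite) :
    (ProperCone.innerDual (ProperCone.innerDual (cone S) : Set (EuclideanSpace ℝ (Fin n)))
      : Set (EuclideanSpace ℝ (Fin n))) = cone S := by
  have hclosed : IsClosed (cone S) := by
    have := isClosed_cone_finset hS.toFinset
    simpa [cone, hS.coe_toFinset] using this
  set K : PointedCone ℝ (EuclideanSpace ℝ (Fin n)) :=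
    Submodule.span {c : ℝ // 0 ≤ c} S with hK
  set C : ProperCone ℝ (EuclideanSpace ℝ (Fin n)) := ⟨K, hclosed⟩ with hC
  have hKset : ((C : ProperCone ℝ (EuclideanSpace ℝ (Fin n))) : Set (EuclideanSpace ℝ (Fin n)))
      = cone S := rfl
  have := ProperCone.innerDual_innerDual C
  calc (ProperCone.innerDual (ProperCone.innerDual (cone S) : Set (EuclideanSpace ℝ (Fin n)))
      : Set (EuclideanSpace ℝ (Fin n)))
      = (ProperCone.innerDual (ProperCone.innerDual ((C : ProperCone ℝ (EuclideanSpace ℝ (Fin n))) : Set (EuclideanSpace ℝ (Fin n)))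
          : Set (EuclideanSpace ℝ (Fin n))) : Set (EuclideanSpace ℝ (Fin n))) := by rw [hKset]
      _ = ((C : ProperCone ℝ (EuclideanSpace ℝ (Fin n))) : Set (EuclideanSpace ℝ (Fin n))) := by
          rw [this]
      _ = cone S := hKset


/-- Theorem 1, finite case: for finite `X` and `G`, `G` is a generator set for `X`
iff the pointed conic hulls of the translated sets coincide exactly. -/
theorem generatorSet_iff_cone_eq_of_finite {n : ℕ} (xh : EuclideanSpace ℝ (Fin n))
    (X G : Set (EuclideanSpace ℝ (Fin n))) (hX : X.Finite) (hG : G.Finite) :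
    invFeas xh G = invFeas xh X ↔
      cone ((fun x => x - xh) '' G) = cone ((fun x => x - xh) '' X) := by
  set A := (fun x => x - xh) '' G with hA
  set B := (fun x => x - xh) '' X with hB
  constructor
  · intro h
    have hdual : ProperCone.innerDual A = ProperCone.innerDual B := by
      apply SetLike.coe_injective
      rw [← invFeas_eq_innerDualCone, ← invFeas_eq_innerDualCone, h]
    have hd2 : ProperCone.innerDual (cone A) = ProperCone.innerDual (cone B) := by
      rw [innerDualCone_cone, innerDualCone_cone, hdual]
    have h3 : (ProperCone.innerDual (ProperCone.innerDual (cone A) : Set (EuclideanSpace ℝ (Fin n)))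
          : Set (EuclideanSpace ℝ (Fin n)))
        = (ProperCone.innerDual (ProperCone.innerDual (cone B) : Set (EuclideanSpace ℝ (Fin n)))
          : Set (EuclideanSpace ℝ (Fin n))) := by rw [hd2]
    rw [cone_double_dual A (hG.image _), cone_double_dual B (hX.image _)] at h3
    exact h3
  · intro h
    have hd : ProperCone.innerDual A = ProperCone.innerDual B := by
      rw [← innerDualCone_cone A, ← innerDualCone_cone B, h]
    rw [invFeas_eq_innerDualCone, invFeas_eq_innerDualCone, ← hA, ← hB, hd]
end

section
/- (Corollary 1, sufficiency.) Let x̂ ∈ ℝⁿ and let G ⊆ X ⊆ ℝⁿ. If every forward-feasible point lies in the cone generated by G from x̂, i.e., x − x̂ ∈ cone({g − x̂ : g ∈ G}) for all x ∈ X, then G is a forward-feasible generator set: C(x̂, G) = C(x̂, X). -/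
/-- Corollary 1, sufficiency: if `G ⊆ X` and every point of `X` lies in the cone
generated by `G` from `x̂`, then `G` is a forward-feasible generator set. -/
theorem forwardFeasible_generatorSet_of_subset_cone {n : ℕ}
    (xh : EuclideanSpace ℝ (Fin n)) (X G : Set (EuclideanSpace ℝ (Fin n)))
    (hGX : G ⊆ X)
    (h : ∀ x ∈ X, x - xh ∈ cone ((fun g => g - xh) '' G)) :
    invFeas xh G = invFeas xh X := by
  ext c
  constructor
  · intro hc x hx
    have key : ∀ v ∈ cone ((fun g => g - xh) '' G), (0 : ℝ) ≤ inner ℝ c v := by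
      intro v hv
      refine Submodule.span_induction ?_ ?_ ?_ ?_ hv
      · rintro _ ⟨g, hg, rfl⟩
        have := hc g hg
        rw [inner_sub_right]
        linarith
      · simp
      · intro a b _ _ ha hb
        rw [inner_add_right]; linarith
      · rintro ⟨t, ht⟩ a _ ha
        have hsm : (⟨t, ht⟩ : {c : ℝ // 0 ≤ c}) • a = t • a := rfl
        rw [hsm, real_inner_smul_right]
        exact mul_nonneg ht ha
    have := key (x - xh) (h x hx)
    rw [inner_sub_right] at this
    linarith
  · intro hc g hg
    exact hc g (hGX hg)
end

section
/- (Corollary 1, precise form.) Let x̂ ∈ ℝⁿ and let G ⊆ X ⊆ ℝⁿ. Then G is a forward-feasible generator set, i.e., C(x̂, G) = C(x̂, X), if and only if every forward-feasible point lies in the closed cone generated by G from x̂: for all x ∈ X, x − x̂ ∈ closure (cone({g − x̂ : g ∈ G})). -/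
/-- If `⟪y, c⟫ ≥ 0` for all `y ∈ S`, then the same holds on the closure of the cone of `S`. -/
lemma nonneg_on_closure_cone {n : ℕ} (c : EuclideanSpace ℝ (Fin n))
    (S : Set (EuclideanSpace ℝ (Fin n))) (h : ∀ y ∈ S, (0:ℝ) ≤ inner ℝ y c) :
    ∀ y ∈ closure (cone S), (0:ℝ) ≤ inner ℝ y c := by
  have h1 : ∀ y ∈ cone S, (0:ℝ) ≤ inner ℝ y c := by
    intro y hy
    induction hy using Submodule.span_induction with
    | mem x hx => exact h x hx
    | zero => simp
    | add x y _ _ hx hy => rw [inner_add_left]; exact add_nonneg hx hy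
    | smul r x _ hx =>
        rw [← Nonneg.coe_smul, real_inner_smul_left]
        exact mul_nonneg r.2 hx
  have hcl : IsClosed {y : EuclideanSpace ℝ (Fin n) | (0:ℝ) ≤ inner ℝ y c} :=
    isClosed_le continuous_const ((continuous_id).inner continuous_const)
  intro y hy
  exact (closure_minimal (fun z hz => h1 z hz) hcl) hy

/-- Corollary 1, precise form: for `G ⊆ X`, `G` is a forward-feasible generator set
iff every point of `X` lies in the closed cone generated by `G` from `x̂`. -/
theorem forwardFeasible_generatorSet_iff_subset_closure_cone {n : ℕ}
    (xh : EuclideanSpace ℝ (Fin n)) (X G : Set (EuclideanSpace ℝ (Fin n)))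
    (hGX : G ⊆ X) :
    invFeas xh G = invFeas xh X ↔
      ∀ x ∈ X, x - xh ∈ closure (cone ((fun g => g - xh) '' G)) := by
  set S : Set (EuclideanSpace ℝ (Fin n)) := (fun g => g - xh) '' G with hS
  -- membership in invFeas G in terms of S
  have hFeasG : ∀ c, c ∈ invFeas xh G ↔ ∀ y ∈ S, (0:ℝ) ≤ inner ℝ y c := by
    intro c
    constructor
    · rintro hc y ⟨g, hg, rfl⟩
      have := hc g hg
      rw [real_inner_comm g c, real_inner_comm xh c] at this
      show (0:ℝ) ≤ inner ℝ (g - xh) c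
      rw [inner_sub_left]
      linarith
    · intro hc g hg
      have := hc (g - xh) ⟨g, hg, rfl⟩
      rw [real_inner_comm, inner_sub_right] at this
      linarith
  constructor
  · intro h x hx
    -- use the bipolar theorem
    set K : ProperCone ℝ (EuclideanSpace ℝ (Fin n)) :=
      (Submodule.span {c : ℝ // 0 ≤ c} S).closure with hK
    have hKset : (K : Set (EuclideanSpace ℝ (Fin n))) = closure (cone S) := rfl
    have hKne : (K : Set (EuclideanSpace ℝ (Fin n))).Nonempty :=
      ⟨0, by rw [hKset]; exact subset_closure (Submodule.zero_mem _)⟩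
    have hKcl : IsClosed (K : Set (EuclideanSpace ℝ (Fin n))) := by
      rw [hKset]; exact isClosed_closure
    have hbip := ProperCone.innerDual_innerDual K
    have hmem : x - xh ∈ ProperCone.innerDual (ProperCone.innerDual (K : Set (EuclideanSpace ℝ (Fin n))) :
        Set (EuclideanSpace ℝ (Fin n))) := by
      intro c hc
      -- hc : c ∈ dual of K, i.e. ∀ y ∈ K, 0 ≤ ⟪y, c⟫
      have hcG : c ∈ invFeas xh G := by
        rw [hFeasG]
        intro y hy
        exact hc (subset_closure (Submodule.subset_span hy))
      have hcX : c ∈ invFeas xh X := h ▸ hcG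
      have := hcX x hx
      show (0:ℝ) ≤ inner ℝ c (x - xh)
      rw [inner_sub_right]
      linarith
    rw [hbip] at hmem
    exact hmem
  · intro h
    ext c
    constructor
    · intro hc x hx
      have h0 : ∀ y ∈ closure (cone S), (0:ℝ) ≤ inner ℝ y c :=
        nonneg_on_closure_cone c S ((hFeasG c).mp hc)
      have := h0 (x - xh) (h x hx)
      rw [inner_sub_left] at this
      rw [real_inner_comm c x, real_inner_comm c xh] at this
      linarith
    · intro hc g hg
      exact hc g (hGX hg)
end

section
/- (Theorem 2, sufficiency.) Let X ⊆ ℝⁿ, x̂ ∈ X, and G ⊆ X. Suppose there exists ε > 0 such that Metric.closedBall x̂ ε ∩ convexHull ℝ X ⊆ convexHull ℝ (G ∪ {x̂}). Then G is a forward-feasible generator set: C(x̂, G) = C(x̂, X). -/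
/-- Theorem 2, sufficiency: if the convex hull of `G ∪ {x̂}` contains a small ball
around `x̂` intersected with the convex hull of `X`, then `G` is a forward-feasible
generator set. -/
theorem forwardFeasible_generatorSet_of_ball_subset {n : ℕ}
    (X : Set (EuclideanSpace ℝ (Fin n))) (xh : EuclideanSpace ℝ (Fin n)) (hx : xh ∈ X)
    (G : Set (EuclideanSpace ℝ (Fin n))) (hGX : G ⊆ X)
    (h : ∃ ε : ℝ, 0 < ε ∧
      Metric.closedBall xh ε ∩ convexHull ℝ X ⊆ convexHull ℝ (G ∪ {xh})) :
    invFeas xh G = invFeas xh X := by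
  obtain ⟨ε, hε, hball⟩ := h
  apply Set.Subset.antisymm
  · intro c hc x hxX
    by_cases hxx : x = xh
    · simp [hxx]
    -- choose small t
    have hnorm : (0:ℝ) < ‖x - xh‖ := by
      rw [norm_pos_iff, sub_ne_zero]; exact hxx
    set t : ℝ := min 1 (ε / ‖x - xh‖) with ht
    have ht0 : 0 < t := lt_min one_pos (div_pos hε hnorm)
    have ht1 : t ≤ 1 := min_le_left _ _
    set y : EuclideanSpace ℝ (Fin n) := xh + t • (x - xh) with hy
    have hyball : y ∈ Metric.closedBall xh ε := by
      rw [Metric.mem_closedBall, dist_eq_norm]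
      have : y - xh = t • (x - xh) := by simp [hy]
      rw [this, norm_smul, Real.norm_eq_abs, abs_of_pos ht0]
      calc t * ‖x - xh‖ ≤ (ε / ‖x - xh‖) * ‖x - xh‖ :=
            mul_le_mul_of_nonneg_right (min_le_right _ _) (norm_nonneg _)
        _ = ε := div_mul_cancel₀ _ (ne_of_gt hnorm)
    have hyhull : y ∈ convexHull ℝ X := by
      have : y = (1 - t) • xh + t • x := by
        simp only [hy]
        rw [smul_sub, sub_smul, one_smul]
        abel
      rw [this]
      exact convex_convexHull ℝ X (subset_convexHull ℝ X hx)
        (subset_convexHull ℝ X hxX) (by linarith) (le_of_lt ht0) (by ring)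
    have hyG : y ∈ convexHull ℝ (G ∪ {xh}) := hball ⟨hyball, hyhull⟩
    -- the halfspace {z | ⟪c,xh⟫ ≤ ⟪c,z⟫} is convex and contains G ∪ {xh}
    have hhalf : convexHull ℝ (G ∪ {xh}) ⊆ {z | (inner ℝ c xh : ℝ) ≤ inner ℝ c z} := by
      apply convexHull_min
      · rintro z (hz | hz)
        · exact hc z hz
        · rw [Set.mem_singleton_iff] at hz; simp [hz]
      · exact convex_halfSpace_ge (innerSL ℝ c).toLinearMap.isLinear _
    have hy' : (inner ℝ c xh : ℝ) ≤ inner ℝ c y := hhalf hyG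
    have hexp : (inner ℝ c y : ℝ) = inner ℝ c xh + t * (inner ℝ c x - inner ℝ c xh) := by
      simp [hy, inner_add_right, inner_smul_right, inner_sub_right]
    rw [hexp] at hy'
    nlinarith
  · intro c hc x hxG
    exact hc x (hGX hxG)
end

section
/- (Theorem 2, necessity for finite generator sets.) Let X ⊆ ℝⁿ, x̂ ∈ X, and let G ⊆ X be a finite set with C(x̂, G) = C(x̂, X). Then there exists ε > 0 such that Metric.closedBall x̂ ε ∩ convexHull ℝ X ⊆ convexHull ℝ (G ∪ {x̂}); i.e., the convex hull of G together with x̂ contains the intersection of a small ball around x̂ with the convex hull of the forward-feasible region. -/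
open Finset Pointwise

section Aux
variable {E : Type*} [NormedAddCommGroup E] [InnerProductSpace ℝ E]

/-- Conic reduction: any nonnegative combination can be rewritten with support a subset
whose convex hull misses the origin. -/
lemma conic_reduce : ∀ (N : ℕ) (s : Finset E), s.card ≤ N → ∀ lam : E → ℝ,
    (∀ v ∈ s, 0 ≤ lam v) →
    ∃ t : Finset E, t ⊆ s ∧ (0 : E) ∉ convexHull ℝ (t : Set E) ∧
      ∃ mu : E → ℝ, (∀ v ∈ t, 0 ≤ mu v) ∧ ∑ v ∈ t, mu v • v = ∑ v ∈ s, lam v • v := by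
  intro N
  classical
  induction N with
  | zero =>
    intro s hs lam hlam
    rw [Nat.le_zero, Finset.card_eq_zero] at hs
    subst hs
    exact ⟨∅, subset_rfl, by simp, lam, by simp, rfl⟩
  | succ N ih =>
    intro s hs lam hlam
    by_cases h0 : (0 : E) ∈ convexHull ℝ (s : Set E)
    · -- get a convex combination of elements of s equal to 0
      rw [Finset.convexHull_eq] at h0
      obtain ⟨w, hw0, hw1, hwc⟩ := h0
      rw [Finset.centerMass_eq_of_sum_1 _ _ hw1] at hwc
      simp only [id_eq] at hwc
      -- there is a v with w v > 0
      have hpos : ∃ v ∈ s, 0 < w v := by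
        by_contra hcon
        push_neg at hcon
        have : ∑ y ∈ s, w y ≤ 0 := Finset.sum_nonpos hcon
        linarith
      -- pick v₁ minimizing lam v / w v among w v > 0
      set sp := s.filter (fun v => 0 < w v) with hsp
      have hspne : sp.Nonempty := by
        obtain ⟨v, hv, hvw⟩ := hpos
        exact ⟨v, Finset.mem_filter.2 ⟨hv, hvw⟩⟩
      obtain ⟨v₁, hv₁, hmin⟩ := sp.exists_min_image (fun v => lam v / w v) hspne
      have hv₁s : v₁ ∈ s := (Finset.mem_filter.1 hv₁).1
      have hv₁w : 0 < w v₁ := (Finset.mem_filter.1 hv₁).2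
      set r := lam v₁ / w v₁ with hr
      have hr0 : 0 ≤ r := div_nonneg (hlam v₁ hv₁s) hv₁w.le
      set lam' := fun v => lam v - r * w v with hlam'
      have hlam'0 : ∀ v ∈ s, 0 ≤ lam' v := by
        intro v hv
        by_cases hwv : 0 < w v
        · have hle : r ≤ lam v / w v := hmin v (Finset.mem_filter.2 ⟨hv, hwv⟩)
          have h2 : r * w v ≤ lam v := by
            rw [← le_div_iff₀ hwv]; exact hle
          simp only [hlam']; linarith
        · have hwv' : w v = 0 := le_antisymm (not_lt.1 hwv) (hw0 v hv)
          simp [hlam', hwv', hlam v hv]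
      have hlam'v₁ : lam' v₁ = 0 := by
        simp [hlam', hr]
        field_simp
        ring
      have hsum : ∑ v ∈ s, lam' v • v = ∑ v ∈ s, lam v • v := by
        simp only [hlam', sub_smul, mul_smul, Finset.sum_sub_distrib]
        rw [← Finset.smul_sum, hwc, smul_zero, sub_zero]
      have hcard : (s.erase v₁).card ≤ N := by
        have := Finset.card_erase_of_mem hv₁s
        omega
      obtain ⟨t, hts, ht0, mu, hmu0, hmusum⟩ := ih (s.erase v₁) hcard lam'
        (fun v hv => hlam'0 v (Finset.mem_of_mem_erase hv))
      refine ⟨t, hts.trans (Finset.erase_subset _ _), ht0, mu, hmu0, ?_⟩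
      rw [hmusum, ← hsum]
      exact Finset.sum_erase _ (by rw [hlam'v₁, zero_smul])
    · exact ⟨s, subset_rfl, h0, lam, hlam, rfl⟩

lemma cone_small_subset (s : Finset E) :
    ∃ ε : ℝ, 0 < ε ∧ ∀ y ∈ Submodule.span {c : ℝ // 0 ≤ c} (s : Set E),
      ‖y‖ ≤ ε → y ∈ convexHull ℝ ((s : Set E) ∪ {0}) := by
  classical
  set f : Finset E → ℝ := fun t => Metric.infDist (0 : E) (convexHull ℝ (t : Set E)) with hf
  set 𝒯 := s.powerset.filter
    (fun t : Finset E => t.Nonempty ∧ (0 : E) ∉ convexHull ℝ (t : Set E)) with h𝒯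
  have hpos : ∀ t ∈ 𝒯, 0 < f t := by
    intro t ht
    rw [h𝒯, Finset.mem_filter] at ht
    obtain ⟨-, htne, ht0⟩ := ht
    have hcl : IsClosed (convexHull ℝ (t : Set E)) :=
      (t.finite_toSet.isCompact_convexHull ℝ).isClosed
    exact (hcl.notMem_iff_infDist_pos ((Finset.coe_nonempty.2 htne).convexHull)).1 ht0
  set ε : ℝ := if h : 𝒯.Nonempty then min 1 (𝒯.inf' h f) else 1 with hε
  have hε0 : 0 < ε := by
    rw [hε]
    split_ifs with h
    · exact lt_min one_pos ((Finset.lt_inf'_iff h).2 (fun t ht => hpos t ht))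
    · exact one_pos
  have hεle : ∀ t ∈ 𝒯, ε ≤ f t := by
    intro t ht
    have h : 𝒯.Nonempty := ⟨t, ht⟩
    rw [hε, dif_pos h]
    exact (min_le_right _ _).trans (Finset.inf'_le f ht)
  refine ⟨ε, hε0, ?_⟩
  intro y hy hnorm
  obtain ⟨c, -, hc⟩ := Submodule.mem_span_finset.1 hy
  set lam : E → ℝ := fun v => (c v : ℝ) with hlam
  have hc' : ∑ v ∈ s, lam v • v = y := hc
  obtain ⟨t, hts, ht0, mu, hmu0, hmusum⟩ :=
    conic_reduce s.card s le_rfl lam (fun v _ => (c v).2)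
  rw [hc'] at hmusum
  set total := ∑ v ∈ t, mu v with htotal
  have htot0 : 0 ≤ total := Finset.sum_nonneg hmu0
  rcases eq_or_lt_of_le htot0 with heq | hlt
  · -- total = 0, so y = 0
    have : ∀ v ∈ t, mu v = 0 :=
      (Finset.sum_eq_zero_iff_of_nonneg hmu0).1 heq.symm
    have hy0 : y = 0 := by
      rw [← hmusum]
      exact Finset.sum_eq_zero fun v hv => by rw [this v hv, zero_smul]
    rw [hy0]
    exact subset_convexHull ℝ _ (Or.inr rfl)
  · -- total > 0
    have hz : t.centerMass mu id ∈ convexHull ℝ (t : Set E) :=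
      t.centerMass_mem_convexHull hmu0 hlt (fun i hi => Finset.mem_coe.2 hi)
    have hzval : t.centerMass mu id = total⁻¹ • y := by
      simp only [Finset.centerMass, id_eq, ← htotal, hmusum]
    have htne : t.Nonempty := Finset.nonempty_of_sum_ne_zero (by rw [← htotal]; exact hlt.ne')
    by_cases hto1 : total ≤ 1
    · -- y = total • z + (1 - total) • 0
      have hzK : t.centerMass mu id ∈ convexHull ℝ ((s : Set E) ∪ {0}) :=
        convexHull_mono (Set.subset_union_of_subset_left (Finset.coe_subset.2 hts) _) hz
      have h0K : (0 : E) ∈ convexHull ℝ ((s : Set E) ∪ {0}) :=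
        subset_convexHull ℝ _ (Or.inr rfl)
      have := (convex_convexHull ℝ ((s : Set E) ∪ {0})) hzK h0K htot0
        (by linarith : (0:ℝ) ≤ 1 - total) (by ring)
      rwa [hzval, smul_smul, mul_inv_cancel₀ hlt.ne', one_smul, smul_zero, add_zero] at this
    · -- total > 1 : contradiction
      exfalso
      push_neg at hto1
      have ht𝒯 : t ∈ 𝒯 := by
        rw [h𝒯, Finset.mem_filter]
        exact ⟨Finset.mem_powerset.2 hts, htne, ht0⟩
      have hyne : y ≠ 0 := by
        intro h
        apply ht0
        rw [h, smul_zero] at hzval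
        rwa [hzval] at hz
      have h1 : f t ≤ ‖total⁻¹ • y‖ := by
        rw [hf]
        have h := Metric.infDist_le_dist_of_mem (x := (0 : E)) (hzval ▸ hz)
        rwa [dist_zero_left] at h
      have h2 : ‖total⁻¹ • y‖ = total⁻¹ * ‖y‖ := by
        rw [norm_smul, Real.norm_eq_abs, abs_of_pos (inv_pos.2 hlt)]
      have h3 : total⁻¹ * ‖y‖ < ‖y‖ := by
        have hy0 : 0 < ‖y‖ := norm_pos_iff.2 hyne
        have : total⁻¹ < 1 := inv_lt_one_of_one_lt₀ hto1
        nlinarith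
      have := (hεle t ht𝒯).trans (h1.trans_eq h2)
      linarith

end Aux

/-- Theorem 2, necessity for finite generator sets: if `G ⊆ X` is a finite
forward-feasible generator set, then the convex hull of `G ∪ {x̂}` contains a small
ball around `x̂` intersected with the convex hull of `X`. -/
theorem ball_subset_of_finite_generatorSet {n : ℕ}
    (X : Set (EuclideanSpace ℝ (Fin n))) (xh : EuclideanSpace ℝ (Fin n)) (hx : xh ∈ X)
    (G : Set (EuclideanSpace ℝ (Fin n))) (hGX : G ⊆ X) (hGfin : G.Finite)
    (hgen : invFeas xh G = invFeas xh X) :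
    ∃ ε : ℝ, 0 < ε ∧
      Metric.closedBall xh ε ∩ convexHull ℝ X ⊆ convexHull ℝ (G ∪ {xh}) := by
  classical
  set V : Finset (EuclideanSpace ℝ (Fin n)) := hGfin.toFinset.image (fun g => g - xh) with hV
  have hVcoe : (V : Set (EuclideanSpace ℝ (Fin n))) = (fun g => g - xh) '' G := by
    rw [hV, Finset.coe_image, Set.Finite.coe_toFinset]
  obtain ⟨ε, hε0, hεsub⟩ := cone_small_subset V
  set P : Submodule {c : ℝ // 0 ≤ c} (EuclideanSpace ℝ (Fin n)) :=
    Submodule.span {c : ℝ // 0 ≤ c} (V : Set (EuclideanSpace ℝ (Fin n))) with hP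
  have hmemP : ∀ g ∈ G, g - xh ∈ P := by
    intro g hg
    apply Submodule.subset_span
    rw [hVcoe]
    exact ⟨g, hg, rfl⟩
  -- Step 1: X - xh is contained in the closure of the cone P
  have hstep1 : ∀ x ∈ X, x - xh ∈ closure (P : Set (EuclideanSpace ℝ (Fin n))) := by
    intro x hxX
    by_contra hmem
    obtain ⟨c, hc1, hc2⟩ :=
      ProperCone.hyperplane_separation' (C := Submodule.closure P) (x₀ := x - xh)
        (fun h => hmem (Submodule.mem_closure_iff.1 h))
    have hcG : c ∈ invFeas xh G := by
      intro g hg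
      have h0 : 0 ≤ (inner ℝ (g - xh) c : ℝ) :=
        hc1 _ (Submodule.mem_closure_iff.2 (Submodule.le_topologicalClosure _ (hmemP g hg)))
      rw [inner_sub_left] at h0
      have := real_inner_comm c g
      have := real_inner_comm c xh
      linarith [h0, real_inner_comm g c, real_inner_comm xh c]
    rw [hgen] at hcG
    have := hcG x hxX
    rw [inner_sub_left] at hc2
    linarith [real_inner_comm c x, real_inner_comm c xh]
  -- Step 2: convexHull X ⊆ xh +ᵥ closure P
  have hstep2 : convexHull ℝ X ⊆ xh +ᵥ closure (P : Set (EuclideanSpace ℝ (Fin n))) := by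
    apply convexHull_min
    · intro x hxX
      exact Set.mem_vadd_set.2 ⟨x - xh, hstep1 x hxX, by simp⟩
    · exact ((P : ConvexCone ℝ (EuclideanSpace ℝ (Fin n))).convex.closure).vadd xh
  -- the target hull as a translate
  have hset : xh +ᵥ ((V : Set (EuclideanSpace ℝ (Fin n))) ∪ {0}) = G ∪ {xh} := by
    rw [hVcoe]
    ext a
    constructor
    · rintro ⟨b, hb, rfl⟩
      rcases hb with ⟨g, hg, rfl⟩ | hb0
      · exact Or.inl (by simpa using hg)
      · rw [Set.mem_singleton_iff] at hb0
        subst hb0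
        exact Or.inr (by simp)
    · rintro (ha | ha)
      · exact ⟨a - xh, Or.inl ⟨a, ha, rfl⟩, by simp⟩
      · rw [Set.mem_singleton_iff] at ha
        exact ⟨0, Or.inr rfl, by simp [ha]⟩
  have hKclosed : IsClosed (convexHull ℝ ((V : Set (EuclideanSpace ℝ (Fin n))) ∪ {0})) :=
    ((V.finite_toSet.union (Set.finite_singleton 0)).isCompact_convexHull ℝ).isClosed
  refine ⟨ε / 2, by positivity, ?_⟩
  rintro z ⟨hzb, hzhull⟩
  obtain ⟨y, hyP, hyz⟩ := Set.mem_vadd_set.1 (hstep2 hzhull)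
  have hyval : y = z - xh := by
    have : xh + y = z := hyz
    linear_combination (norm := module) this
  have hynorm : ‖y‖ ≤ ε / 2 := by
    rw [hyval, ← dist_eq_norm]
    exact Metric.mem_closedBall.1 hzb
  -- y is in the closure of (P ∩ ball 0 ε), hence in the (closed) hull K
  have hyK : y ∈ convexHull ℝ ((V : Set (EuclideanSpace ℝ (Fin n))) ∪ {0}) := by
    have hcl : y ∈ closure ((P : Set (EuclideanSpace ℝ (Fin n))) ∩ Metric.ball 0 ε) := by
      rw [mem_closure_iff] at hyP ⊢
      intro o ho hyo
      have hyball : y ∈ Metric.ball (0 : EuclideanSpace ℝ (Fin n)) ε := by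
        rw [Metric.mem_ball, dist_zero_right]
        linarith
      obtain ⟨w, hw1, hw2⟩ := hyP (o ∩ Metric.ball 0 ε) (ho.inter Metric.isOpen_ball)
        ⟨hyo, hyball⟩
      exact ⟨w, hw1.1, hw2, hw1.2⟩
    have hsub : (P : Set (EuclideanSpace ℝ (Fin n))) ∩ Metric.ball 0 ε ⊆
        convexHull ℝ ((V : Set (EuclideanSpace ℝ (Fin n))) ∪ {0}) := by
      rintro w ⟨hwP, hwb⟩
      exact hεsub w hwP (le_of_lt (by rwa [Metric.mem_ball, dist_zero_right] at hwb))
    have := closure_mono hsub hcl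
    rwa [hKclosed.closure_eq] at this
  rw [← hset, convexHull_vadd]
  exact ⟨y, hyK, hyz⟩
end
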